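/- Suppose a finite graph L is the edge-disjoint union of three graphs L^1, L^2, L^3 on the same vertex set, and each L^i has all vertex degrees in the interval [(1-ι)d, (1+ι)d] for some d > 0 and ι ∈ (0,1). Then λ_{1,p}(L) ≥ ((1-ι)/(1+ι))·(1/3)·(λ_{1,p}(L^1) + λ_{1,p}(L^2) + λ_{1,p}(L^3)). -/

import Mathlib

open Finset

/-- The valency (degree) of a vertex `u` in the multigraph with edge set `E`,
each edge `e` having endpoints `(ends e).1` and `(ends e).2`. -/
def graphVal {V E : Type} [Fintype E] [DecidableEq V] (ends : E → V × V) (u : V) : ℕ :=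
  ∑ e : E, ((if (ends e).1 = u then 1 else 0) + (if (ends e).2 = u then 1 else 0))

/-- The p-energy ‖dx‖_p^p = Σ_e |x(e_+) - x(e_-)|^p of a function on the vertices. -/
noncomputable def graphEnergy {V E : Type} [Fintype E] (p : ℝ) (ends : E → V × V)
    (x : V → ℝ) : ℝ :=
  ∑ e : E, |x (ends e).2 - x (ends e).1| ^ p

/-- inf_{c ∈ ℝ} Σ_u |x_u - c|^p · val(u). -/
noncomputable def graphDenom {V E : Type} [Fintype V] [Fintype E] [DecidableEq V]
    (p : ℝ) (ends : E → V × V) (x : V → ℝ) : ℝ :=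
  sInf {t : ℝ | ∃ c : ℝ, t = ∑ u : V, |x u - c| ^ p * (graphVal ends u : ℝ)}

/-- λ_{1,p}: the first positive eigenvalue of the graph p-Laplacian, via the
Rayleigh quotient characterisation: infimum over non-constant `x` of
energy/denominator. -/
noncomputable def lambda1 {V E : Type} [Fintype V] [Fintype E] [DecidableEq V]
    (p : ℝ) (ends : E → V × V) : ℝ :=
  sInf {r : ℝ | ∃ x : V → ℝ, (∃ u v : V, x u ≠ x v) ∧
    r = graphEnergy p ends x / graphDenom p ends x}

/-- Adjacency relation of the multigraph. -/
def graphAdj {V E : Type} (ends : E → V × V) (u v : V) : Prop :=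
  ∃ e : E, ends e = (u, v) ∨ ends e = (v, u)

/-- Connectivity of the multigraph. -/
def graphConnected {V E : Type} (ends : E → V × V) : Prop :=
  ∀ u v : V, Relation.ReflTransGen (graphAdj ends) u v


section AuxLemmas

variable {V E : Type} [Fintype V] [Fintype E] [DecidableEq V]

lemma aux_sum_nonneg (p : ℝ) (ends : E → V × V) (x : V → ℝ) (c : ℝ) :
    0 ≤ ∑ u : V, |x u - c| ^ p * (graphVal ends u : ℝ) :=
  Finset.sum_nonneg fun u _ =>
    mul_nonneg (Real.rpow_nonneg (abs_nonneg _) _) (Nat.cast_nonneg _)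

lemma aux_denom_bddBelow (p : ℝ) (ends : E → V × V) (x : V → ℝ) :
    BddBelow {t : ℝ | ∃ c : ℝ, t = ∑ u : V, |x u - c| ^ p * (graphVal ends u : ℝ)} := by
  refine ⟨0, ?_⟩
  rintro t ⟨c, rfl⟩
  exact aux_sum_nonneg p ends x c

lemma aux_denom_le (p : ℝ) (ends : E → V × V) (x : V → ℝ) (c : ℝ) :
    graphDenom p ends x ≤ ∑ u : V, |x u - c| ^ p * (graphVal ends u : ℝ) :=
  csInf_le (aux_denom_bddBelow p ends x) ⟨c, rfl⟩

lemma aux_denom_nonneg (p : ℝ) (ends : E → V × V) (x : V → ℝ) :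
    0 ≤ graphDenom p ends x := by
  apply Real.sInf_nonneg
  rintro t ⟨c, rfl⟩
  exact aux_sum_nonneg p ends x c

lemma aux_energy_nonneg (p : ℝ) (ends : E → V × V) (x : V → ℝ) :
    0 ≤ graphEnergy p ends x :=
  Finset.sum_nonneg fun e _ => Real.rpow_nonneg (abs_nonneg _) _

lemma aux_lambda1_nonneg (p : ℝ) (ends : E → V × V) :
    0 ≤ lambda1 p ends := by
  apply Real.sInf_nonneg
  rintro r ⟨x, _, rfl⟩
  exact div_nonneg (aux_energy_nonneg p ends x) (aux_denom_nonneg p ends x)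

lemma aux_lambda1_le (p : ℝ) (ends : E → V × V) (x : V → ℝ)
    (hx : ∃ u v : V, x u ≠ x v) :
    lambda1 p ends ≤ graphEnergy p ends x / graphDenom p ends x := by
  apply csInf_le
  · refine ⟨0, ?_⟩
    rintro r ⟨y, _, rfl⟩
    exact div_nonneg (aux_energy_nonneg p ends y) (aux_denom_nonneg p ends y)
  · exact ⟨x, hx, rfl⟩

lemma aux_lambda1_mul_denom_le (p : ℝ) (ends : E → V × V) (x : V → ℝ)
    (hx : ∃ u v : V, x u ≠ x v) :
    lambda1 p ends * graphDenom p ends x ≤ graphEnergy p ends x := by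
  have h := aux_lambda1_le p ends x hx
  rcases eq_or_lt_of_le (aux_denom_nonneg p ends x) with hD | hD
  · rw [← hD, mul_zero]; exact aux_energy_nonneg p ends x
  · calc lambda1 p ends * graphDenom p ends x
        ≤ (graphEnergy p ends x / graphDenom p ends x) * graphDenom p ends x :=
          mul_le_mul_of_nonneg_right h hD.le
      _ = graphEnergy p ends x := div_mul_cancel₀ _ hD.ne'

lemma aux_denom_ge {E' : Type} [Fintype E'] (p K : ℝ) (hK : 0 ≤ K)
    (endsL : E → V × V) (ends' : E' → V × V) (x : V → ℝ)
    (h : ∀ u : V, K * (graphVal endsL u : ℝ) ≤ (graphVal ends' u : ℝ)) :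
    K * graphDenom p endsL x ≤ graphDenom p ends' x := by
  refine le_csInf ⟨∑ u : V, |x u - (0:ℝ)| ^ p * (graphVal ends' u : ℝ), ⟨0, rfl⟩⟩ ?_
  rintro t ⟨c, rfl⟩
  calc K * graphDenom p endsL x
      ≤ K * ∑ u : V, |x u - c| ^ p * (graphVal endsL u : ℝ) :=
        mul_le_mul_of_nonneg_left (aux_denom_le p endsL x c) hK
    _ = ∑ u : V, |x u - c| ^ p * (K * (graphVal endsL u : ℝ)) := by
        rw [Finset.mul_sum]; exact Finset.sum_congr rfl fun u _ => by ring
    _ ≤ ∑ u : V, |x u - c| ^ p * (graphVal ends' u : ℝ) :=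
        Finset.sum_le_sum fun u _ =>
          mul_le_mul_of_nonneg_left (h u) (Real.rpow_nonneg (abs_nonneg _) _)

end AuxLemmas

lemma aux_lambda1_subsingleton {V E : Type} [Fintype V] [Fintype E] [DecidableEq V]
    (hV : Subsingleton V) (p : ℝ) (ends : E → V × V) : lambda1 p ends = 0 := by
  have h : {r : ℝ | ∃ x : V → ℝ, (∃ u v : V, x u ≠ x v) ∧
      r = graphEnergy p ends x / graphDenom p ends x} = ∅ := by
    ext r
    simp only [Set.mem_setOf_eq, Set.mem_empty_iff_false, iff_false, not_exists]
    rintro x ⟨⟨u, v, huv⟩, -⟩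
    exact huv (congrArg x (Subsingleton.elim u v))
  rw [lambda1, h, Real.sInf_empty]


/-- If L = L¹ ∪ L² ∪ L³ is an edge-disjoint union of three graphs on the same
vertex set, each with all degrees in [(1-ι)d, (1+ι)d], then
λ_{1,p}(L) ≥ ((1-ι)/(1+ι))·(1/3)·(λ_{1,p}(L¹) + λ_{1,p}(L²) + λ_{1,p}(L³)). -/
theorem stmt9 {V E₁ E₂ E₃ : Type} [Fintype V] [Fintype E₁] [Fintype E₂] [Fintype E₃]
    [DecidableEq V]
    (ends₁ : E₁ → V × V) (ends₂ : E₂ → V × V) (ends₃ : E₃ → V × V)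
    (p : ℝ) (hp : 1 < p) (d : ℝ) (hd : 0 < d) (ι : ℝ) (hι0 : 0 < ι) (hι1 : ι < 1)
    (hdeg₁ : ∀ u : V, (1 - ι) * d ≤ (graphVal ends₁ u : ℝ) ∧ (graphVal ends₁ u : ℝ) ≤ (1 + ι) * d)
    (hdeg₂ : ∀ u : V, (1 - ι) * d ≤ (graphVal ends₂ u : ℝ) ∧ (graphVal ends₂ u : ℝ) ≤ (1 + ι) * d)
    (hdeg₃ : ∀ u : V, (1 - ι) * d ≤ (graphVal ends₃ u : ℝ) ∧ (graphVal ends₃ u : ℝ) ≤ (1 + ι) * d) :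
    lambda1 p (Sum.elim ends₁ (Sum.elim ends₂ ends₃) : E₁ ⊕ (E₂ ⊕ E₃) → V × V) ≥
      (1 - ι) / (1 + ι) * (1 / 3) *
        (lambda1 p ends₁ + lambda1 p ends₂ + lambda1 p ends₃) := by
  set endsL : E₁ ⊕ (E₂ ⊕ E₃) → V × V := Sum.elim ends₁ (Sum.elim ends₂ ends₃) with hendsL
  have hp0 : (0:ℝ) ≤ p := by linarith
  set K : ℝ := (1 - ι) / (1 + ι) * (1 / 3) with hKdef
  have h1ι : (0:ℝ) < 1 + ι := by linarith
  have h1ι' : (0:ℝ) < 1 - ι := by linarith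
  have hK : 0 < K := by
    apply mul_pos (div_pos h1ι' h1ι); norm_num
  have hval : ∀ u : V, (graphVal endsL u : ℝ) =
      (graphVal ends₁ u : ℝ) + (graphVal ends₂ u : ℝ) + (graphVal ends₃ u : ℝ) := by
    intro u
    have : graphVal endsL u = graphVal ends₁ u + graphVal ends₂ u + graphVal ends₃ u := by
      unfold graphVal
      rw [hendsL, Fintype.sum_sum_type, Fintype.sum_sum_type]
      simp [add_assoc]
      rfl
    rw [this]; push_cast; ring
  rcases subsingleton_or_nontrivial V with hV | hV
  · rw [aux_lambda1_subsingleton hV p endsL, aux_lambda1_subsingleton hV p ends₁,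
      aux_lambda1_subsingleton hV p ends₂, aux_lambda1_subsingleton hV p ends₃]
    simp
  · rw [ge_iff_le, lambda1]
    apply le_csInf
    · obtain ⟨u, v, huv⟩ := exists_pair_ne V
      refine ⟨_, ⟨fun w => if w = u then (1:ℝ) else 0, ⟨u, v, ?_⟩, rfl⟩⟩
      simp [if_neg (Ne.symm huv)]
    · rintro r ⟨x, ⟨a, b, hab⟩, rfl⟩
      have hab' : a ≠ b := fun h => hab (congrArg x h)
      have hxab : (0:ℝ) < |x a - x b| / 2 :=
        div_pos (abs_pos.mpr (sub_ne_zero.mpr hab)) two_pos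
      set m : ℝ := (|x a - x b| / 2) ^ p with hm
      have hmpos : 0 < m := Real.rpow_pos_of_pos hxab p
      have h3d : (0:ℝ) < 3 * (1 - ι) * d := by nlinarith
      have hvL : ∀ u : V, 3 * (1 - ι) * d ≤ (graphVal endsL u : ℝ) := by
        intro u
        rw [hval u]
        have h1 := (hdeg₁ u).1; have h2 := (hdeg₂ u).1; have h3 := (hdeg₃ u).1
        linarith
      have hDlb : 3 * (1 - ι) * d * m ≤ graphDenom p endsL x := by
        refine le_csInf ⟨∑ u : V, |x u - (0:ℝ)| ^ p * (graphVal endsL u : ℝ), ⟨0, rfl⟩⟩ ?_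
        rintro t ⟨c, rfl⟩
        have hkey : m ≤ |x a - c| ^ p + |x b - c| ^ p := by
          have habc : |x a - x b| ≤ |x a - c| + |x b - c| := by
            calc |x a - x b| ≤ |x a - c| + |c - x b| := abs_sub_le _ _ _
              _ = |x a - c| + |x b - c| := by rw [abs_sub_comm c (x b)]
          rcases le_total (|x a - c|) (|x b - c|) with h | h
          · have h2 : |x a - x b| / 2 ≤ |x b - c| := by linarith
            calc m ≤ |x b - c| ^ p := Real.rpow_le_rpow hxab.le h2 hp0
              _ ≤ _ := le_add_of_nonneg_left (Real.rpow_nonneg (abs_nonneg _) _)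
          · have h2 : |x a - x b| / 2 ≤ |x a - c| := by linarith
            calc m ≤ |x a - c| ^ p := Real.rpow_le_rpow hxab.le h2 hp0
              _ ≤ _ := le_add_of_nonneg_right (Real.rpow_nonneg (abs_nonneg _) _)
        calc 3 * (1 - ι) * d * m
            ≤ 3 * (1 - ι) * d * (|x a - c| ^ p + |x b - c| ^ p) :=
              mul_le_mul_of_nonneg_left hkey h3d.le
          _ = |x a - c| ^ p * (3 * (1 - ι) * d) + |x b - c| ^ p * (3 * (1 - ι) * d) := by
              ring
          _ ≤ |x a - c| ^ p * (graphVal endsL a : ℝ)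
              + |x b - c| ^ p * (graphVal endsL b : ℝ) :=
              add_le_add
                (mul_le_mul_of_nonneg_left (hvL a) (Real.rpow_nonneg (abs_nonneg _) _))
                (mul_le_mul_of_nonneg_left (hvL b) (Real.rpow_nonneg (abs_nonneg _) _))
          _ = ∑ u ∈ ({a, b} : Finset V), |x u - c| ^ p * (graphVal endsL u : ℝ) :=
              (Finset.sum_pair (f := fun u => |x u - c| ^ p * (graphVal endsL u : ℝ)) hab').symm
          _ ≤ ∑ u : V, |x u - c| ^ p * (graphVal endsL u : ℝ) :=
              Finset.sum_le_sum_of_subset_of_nonneg (Finset.subset_univ _)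
                (fun u _ _ =>
                  mul_nonneg (Real.rpow_nonneg (abs_nonneg _) _) (Nat.cast_nonneg _))
      have hDpos : 0 < graphDenom p endsL x :=
        lt_of_lt_of_le (mul_pos h3d hmpos) hDlb
      have hKv : ∀ u : V, K * (graphVal endsL u : ℝ) ≤ (1 - ι) * d := by
        intro u
        have hub : (graphVal endsL u : ℝ) ≤ 3 * (1 + ι) * d := by
          rw [hval u]
          have h1 := (hdeg₁ u).2; have h2 := (hdeg₂ u).2; have h3 := (hdeg₃ u).2
          linarith
        have heq : K * (3 * (1 + ι) * d) = (1 - ι) * d := by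
          rw [hKdef]; field_simp
        calc K * (graphVal endsL u : ℝ) ≤ K * (3 * (1 + ι) * d) :=
              mul_le_mul_of_nonneg_left hub hK.le
          _ = (1 - ι) * d := heq
      have hD1 : K * graphDenom p endsL x ≤ graphDenom p ends₁ x :=
        aux_denom_ge p K hK.le endsL ends₁ x (fun u => (hKv u).trans (hdeg₁ u).1)
      have hD2 : K * graphDenom p endsL x ≤ graphDenom p ends₂ x :=
        aux_denom_ge p K hK.le endsL ends₂ x (fun u => (hKv u).trans (hdeg₂ u).1)
      have hD3 : K * graphDenom p endsL x ≤ graphDenom p ends₃ x :=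
        aux_denom_ge p K hK.le endsL ends₃ x (fun u => (hKv u).trans (hdeg₃ u).1)
      have hnc : ∃ u v : V, x u ≠ x v := ⟨a, b, hab⟩
      have hE1 := aux_lambda1_mul_denom_le p ends₁ x hnc
      have hE2 := aux_lambda1_mul_denom_le p ends₂ x hnc
      have hE3 := aux_lambda1_mul_denom_le p ends₃ x hnc
      have hl1 := aux_lambda1_nonneg p ends₁
      have hl2 := aux_lambda1_nonneg p ends₂
      have hl3 := aux_lambda1_nonneg p ends₃
      have hEL : graphEnergy p endsL x =
          graphEnergy p ends₁ x + graphEnergy p ends₂ x + graphEnergy p ends₃ x := by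
        unfold graphEnergy
        rw [hendsL, Fintype.sum_sum_type, Fintype.sum_sum_type]
        simp [add_assoc]
      rw [le_div_iff₀ hDpos]
      have c1 : lambda1 p ends₁ * (K * graphDenom p endsL x) ≤ graphEnergy p ends₁ x :=
        le_trans (mul_le_mul_of_nonneg_left hD1 hl1) hE1
      have c2 : lambda1 p ends₂ * (K * graphDenom p endsL x) ≤ graphEnergy p ends₂ x :=
        le_trans (mul_le_mul_of_nonneg_left hD2 hl2) hE2
      have c3 : lambda1 p ends₃ * (K * graphDenom p endsL x) ≤ graphEnergy p ends₃ x :=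
        le_trans (mul_le_mul_of_nonneg_left hD3 hl3) hE3
      calc K * (lambda1 p ends₁ + lambda1 p ends₂ + lambda1 p ends₃)
            * graphDenom p endsL x
          = lambda1 p ends₁ * (K * graphDenom p endsL x)
            + lambda1 p ends₂ * (K * graphDenom p endsL x)
            + lambda1 p ends₃ * (K * graphDenom p endsL x) := by ring
        _ ≤ graphEnergy p ends₁ x + graphEnergy p ends₂ x + graphEnergy p ends₃ x := by
            linarith
        _ = graphEnergy p endsL x := hEL.symm
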